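/- Let M → X → P → ΣM and M → X' → P' → ΣM be two distinguished triangles in 𝖳 in which M → X and M → X' are both 𝒳-preenvelopes of M. Then P and P' become isomorphic in the quotient by 𝒳: there exist morphisms p : P → P' and q : P' → P such that id_P − q∘p factors through an object of 𝒳 and id_{P'} − p∘q factors through an object of 𝒳. (Hence the object σM of the quotient category 𝖳_𝒳 is independent of the choice of 𝒳-preenvelope.) -/

import Mathlib

/-!
STATEMENT 11.  Let `T` be a triangulated category and `𝒳` a class of objects.
Given two distinguished triangles `M → X → P → ΣM` and `M → X' → P' → ΣM` in which
`M → X` and `M → X'` are `𝒳`-preenvelopes of `M`, the cones `P` and `P'` become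
isomorphic in the quotient by `𝒳`.
-/

open CategoryTheory CategoryTheory.Limits CategoryTheory.Pretriangulated

/-- A morphism factors through (some object of) the class `𝒳`. -/
def FactorsThroughClass {C : Type*} [Category C] (𝒳 : Set C) {A B : C} (f : A ⟶ B) : Prop :=
  ∃ (X : C) (g : A ⟶ X) (h : X ⟶ B), X ∈ 𝒳 ∧ g ≫ h = f

/-- `f : A ⟶ B` is an `𝒳`-monomorphism: every morphism from `A` to an object of `𝒳`
factors through `f`. -/
def XMono {C : Type*} [Category C] (𝒳 : Set C) {A B : C} (f : A ⟶ B) : Prop :=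
  ∀ (X : C), X ∈ 𝒳 → ∀ (g : A ⟶ X), ∃ h : B ⟶ X, f ≫ h = g

theorem cone_of_preenvelope_unique_up_to_X_isomorphism
    {C : Type*} [Category C] [Preadditive C] [HasZeroObject C] [HasShift C ℤ]
    [∀ n : ℤ, (CategoryTheory.shiftFunctor C n).Additive] [Pretriangulated C]
    (𝒳 : Set C)
    (M X P X' P' : C)
    (e : M ⟶ X) (g : X ⟶ P) (h : P ⟶ M⟦(1 : ℤ)⟧)
    (e' : M ⟶ X') (g' : X' ⟶ P') (h' : P' ⟶ M⟦(1 : ℤ)⟧)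
    (hT : Triangle.mk e g h ∈ distTriang C)
    (hT' : Triangle.mk e' g' h' ∈ distTriang C)
    (hX : X ∈ 𝒳) (he : XMono 𝒳 e)
    (hX' : X' ∈ 𝒳) (he' : XMono 𝒳 e') :
    ∃ (p : P ⟶ P') (q : P' ⟶ P),
      FactorsThroughClass 𝒳 (𝟙 P - p ≫ q) ∧ FactorsThroughClass 𝒳 (𝟙 P' - q ≫ p) := by
  obtain ⟨a, ha⟩ := he X' hX' e'
  obtain ⟨b, hb⟩ := he' X hX e
  obtain ⟨p, hp₁, hp₂⟩ := complete_distinguished_triangle_morphism _ _ hT hT' (𝟙 M) a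
    (ha.trans (Category.id_comp _).symm)
  obtain ⟨q, hq₁, hq₂⟩ := complete_distinguished_triangle_morphism _ _ hT' hT (𝟙 M) b
    (hb.trans (Category.id_comp _).symm)
  dsimp only [Triangle.mk] at p q
  simp only [Triangle.mk_mor₁, Triangle.mk_mor₂, Triangle.mk_mor₃, Functor.map_id,
    Category.comp_id] at hp₁ hp₂ hq₁ hq₂
  change h ≫ (shiftFunctor C 1).map (𝟙 M) = p ≫ h' at hp₂
  change h' ≫ (shiftFunctor C 1).map (𝟙 M) = q ≫ h at hq₂
  have z1 : (𝟙 P - p ≫ q) ≫ h = 0 := by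
    simp only [Preadditive.sub_comp, Category.id_comp, Category.assoc]
    rw [← hq₂, ← Category.assoc, ← hp₂]
    simp
  have z2 : (𝟙 P' - q ≫ p) ≫ h' = 0 := by
    simp only [Preadditive.sub_comp, Category.id_comp, Category.assoc]
    rw [← hp₂, ← Category.assoc, ← hq₂]
    simp
  obtain ⟨s, hs⟩ := Triangle.coyoneda_exact₃ _ hT (𝟙 P - p ≫ q) z1
  obtain ⟨s', hs'⟩ := Triangle.coyoneda_exact₃ _ hT' (𝟙 P' - q ≫ p) z2
  exact ⟨p, q, ⟨X, s, g, hX, hs.symm⟩, ⟨X', s', g', hX', hs'.symm⟩⟩
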